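/- Let M' = (V, I') and M'' = (V, I'') be two matroids and suppose a common independent set S' ∈ I' ∩ I'' is obtained from S ∈ I' ∩ I'' by augmenting along a shortest (s, t)-path in the exchange graph G(S) (so |S'| > |S|). Let d denote distance in G(S) and d' denote distance in G(S'). Then for all v ∈ V: (i) if d(s, v) < d(s, t) then d'(s, v) ≥ d(s, v), and if d(v, t) < d(s, t) then d'(v, t) ≥ d(v, t); (ii) if d(s, v) ≥ d(s, t) then d'(s, v) ≥ d(s, t), and if d(v, t) ≥ d(s, t) then d'(v, t) ≥ d(s, t). -/

import Mathlib

/-- A matroid on a finite ground set `V`, given by its family of independent sets. -/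
structure FinMatroid (V : Type*) [DecidableEq V] [Fintype V] where
  Indep : Finset V → Prop
  indep_empty : Indep ∅
  indep_subset : ∀ ⦃S T : Finset V⦄, Indep S → T ⊆ S → Indep T
  indep_aug : ∀ ⦃S T : Finset V⦄, Indep S → Indep T → T.card < S.card →
    ∃ x ∈ S \ T, Indep (insert x T)

/-- `reachIn Adj n x y` : there is a directed walk with exactly `n` edges from `x` to `y`. -/
def reachIn {α : Type*} (Adj : α → α → Prop) : ℕ → α → α → Prop
  | 0, x, y => x = y
  | n + 1, x, y => ∃ z, Adj x z ∧ reachIn Adj n z y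

/-- Distance (number of edges of a shortest directed path) from `x` to `y`; `⊤` if none. -/
noncomputable def ddist {α : Type*} (Adj : α → α → Prop) (x y : α) : ℕ∞ :=
  sInf {n : ℕ∞ | ∃ m : ℕ, n = (m : ℕ∞) ∧ reachIn Adj m x y}

/-- Vertices of the exchange graph: the ground elements plus a source `src` and a sink `snk`. -/
inductive XVert (V : Type*) where
  | elt : V → XVert V
  | src : XVert V
  | snk : XVert V

/-- The exchange graph `G(S)` of two matroids relative to a common independent set `S`. -/
def exchangeAdj {V : Type*} [DecidableEq V] [Fintype V]
    (M₁ M₂ : FinMatroid V) (S : Finset V) : XVert V → XVert V → Prop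
  | XVert.elt a, XVert.elt b =>
      (a ∈ S ∧ b ∉ S ∧ M₁.Indep (insert b (S.erase a))) ∨
      (a ∉ S ∧ b ∈ S ∧ M₂.Indep (insert a (S.erase b)))
  | XVert.src, XVert.elt b => b ∉ S ∧ M₁.Indep (insert b S)
  | XVert.elt a, XVert.snk => a ∉ S ∧ M₂.Indep (insert a S)
  | _, _ => False

namespace XAux

variable {α : Type*} {Adj : α → α → Prop}

lemma reachIn_append : ∀ {m n : ℕ} {x y z : α}, reachIn Adj m x y → reachIn Adj n y z →
    reachIn Adj (m + n) x z := by
  intro m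
  induction m with
  | zero => intro n x y z h h'; cases h; simpa using h'
  | succ k ih =>
    intro n x y z h h'
    obtain ⟨w, hw, hr⟩ := h
    have : reachIn Adj (k + n + 1) x z := ⟨w, hw, ih hr h'⟩
    simpa [Nat.succ_add, Nat.add_comm, Nat.add_left_comm] using this
    

lemma reachIn_snoc : ∀ {m : ℕ} {x y z : α}, reachIn Adj m x y → Adj y z →
    reachIn Adj (m + 1) x z := by
  intro m
  induction m with
  | zero => intro x y z h h'; cases h; exact ⟨z, h', rfl⟩
  | succ k ih =>
    intro x y z h h'
    obtain ⟨w, hw, hr⟩ := h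
    exact ⟨w, hw, ih hr h'⟩

lemma reachIn_succ_iff {m : ℕ} {x z : α} :
    reachIn Adj (m + 1) x z ↔ ∃ y, reachIn Adj m x y ∧ Adj y z := by
  constructor
  · induction m generalizing x with
    | zero => rintro ⟨y, hy, h⟩; cases h; exact ⟨x, rfl, hy⟩
    | succ k ih =>
      rintro ⟨w, hw, hr⟩
      obtain ⟨y, hy, h⟩ := ih hr
      exact ⟨y, ⟨w, hw, hy⟩, h⟩
  · rintro ⟨y, hy, h⟩; exact reachIn_snoc hy h

lemma ddist_le_of_reachIn {m : ℕ} {x y : α} (h : reachIn Adj m x y) :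
    ddist Adj x y ≤ (m : ℕ∞) :=
  sInf_le ⟨m, rfl, h⟩

lemma le_ddist {c : ℕ∞} {x y : α} (h : ∀ m : ℕ, reachIn Adj m x y → c ≤ (m : ℕ∞)) :
    c ≤ ddist Adj x y :=
  le_sInf (by rintro b ⟨m, rfl, hm⟩; exact h m hm)

lemma ddist_spec (x y : α) :
    ddist Adj x y = ⊤ ∨ ∃ m : ℕ, ddist Adj x y = (m : ℕ∞) ∧ reachIn Adj m x y := by
  classical
  by_cases h : ∃ m : ℕ, reachIn Adj m x y
  · right
    refine ⟨Nat.find h, le_antisymm (ddist_le_of_reachIn (Nat.find_spec h)) ?_, Nat.find_spec h⟩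
    exact le_ddist fun m hm => by exact_mod_cast Nat.find_min' h hm
  · left
    rw [ddist, sInf_eq_top]
    rintro b ⟨m, rfl, hm⟩
    exact absurd ⟨m, hm⟩ h

lemma ddist_step {x y z : α} (h : Adj y z) : ddist Adj x z ≤ ddist Adj x y + 1 := by
  rcases ddist_spec (Adj := Adj) x y with hc | ⟨m, hm, hr⟩
  · simp [hc]
  · rw [hm]
    exact_mod_cast ddist_le_of_reachIn (reachIn_snoc hr h)

lemma ddist_self (x : α) : ddist Adj x x = 0 := by
  simpa using ddist_le_of_reachIn (Adj := Adj) (m := 0) (x := x) (y := x) rfl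



section Dual
variable {V : Type*} [DecidableEq V] [Fintype V] (M₁ M₂ : FinMatroid V) (S : Finset V)

def flip : XVert V → XVert V
  | XVert.elt a => XVert.elt a
  | XVert.src => XVert.snk
  | XVert.snk => XVert.src

@[simp] lemma flip_flip (x : XVert V) : flip (flip x) = x := by cases x <;> rfl

lemma dual_adj (x y : XVert V) :
    exchangeAdj M₁ M₂ S x y ↔ exchangeAdj M₂ M₁ S (flip y) (flip x) := by
  cases x <;> cases y <;> simp [exchangeAdj, flip] <;> tauto

end Dual

section Dual2
variable {α : Type*}

lemma reachIn_reverse {A B : α → α → Prop} {f : α → α} (hff : ∀ x, f (f x) = x)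
    (hAB : ∀ x y, A x y ↔ B (f y) (f x)) :
    ∀ {m : ℕ} {x y : α}, reachIn A m x y → reachIn B m (f y) (f x) := by
  intro m
  induction m with
  | zero => rintro x y rfl; rfl
  | succ k ih =>
    rintro x y ⟨z, hz, hr⟩
    exact reachIn_snoc (ih hr) ((hAB x z).1 hz)

lemma ddist_reverse {A B : α → α → Prop} {f : α → α} (hff : ∀ x, f (f x) = x)
    (hAB : ∀ x y, A x y ↔ B (f y) (f x)) (x y : α) :
    ddist A x y = ddist B (f y) (f x) := by
  apply le_antisymm
  · apply le_ddist
    intro m hm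
    have := reachIn_reverse (A := B) (B := A) hff
      (fun a b => by rw [hAB (f b) (f a), hff, hff]) hm
    rw [hff, hff] at this
    exact ddist_le_of_reachIn this
  · exact le_ddist fun m hm => ddist_le_of_reachIn (reachIn_reverse hff hAB hm)

end Dual2

variable {V : Type*} [DecidableEq V] [Fintype V]

/-- If every element of `B` is spanned "through `X`" (no exchange outside `X`), then any
independent set inside `X ∪ B` has size at most `|X|`. -/
lemma lemR (M : FinMatroid V) {S X A : Finset V} (hS : M.Indep S) (hX : X ⊆ S)
    (hA : M.Indep A) (P : V → Prop)
    (hB : ∀ w, P w → w ∉ S ∧ ¬ M.Indep (insert w S) ∧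
      ∀ u ∈ S, M.Indep (insert w (S.erase u)) → u ∈ X)
    (hAXB : ∀ x ∈ A, x ∈ X ∨ P x) : A.card ≤ X.card := by
  by_contra hcon
  push_neg at hcon
  obtain ⟨z, hz, hzX⟩ := M.indep_aug hA (M.indep_subset hS hX) hcon
  rw [Finset.mem_sdiff] at hz
  have hPz : P z := (hAXB z hz.1).resolve_left hz.2
  obtain ⟨hzS, hzIns, harc⟩ := hB z hPz
  -- grow `insert z X` to an independent set of size `S.card` inside `insert z S`
  have grow : ∀ n (C : Finset V), M.Indep C → C ⊆ insert z S → z ∈ C → X ⊆ C →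
      C.card + n = S.card → False := by
    intro n
    induction n with
    | zero =>
      intro C hC hCsub hzC hXC hcard
      simp only [Nat.add_zero] at hcard
      have hSC : ∃ u, u ∈ S ∧ u ∉ C := by
        by_contra hno
        push_neg at hno
        have : insert z S ⊆ C := by
          intro x hx
          rcases Finset.mem_insert.1 hx with rfl | hx
          · exact hzC
          · exact hno x hx
        have hle : (insert z S).card ≤ C.card := Finset.card_le_card this
        rw [Finset.card_insert_of_notMem hzS] at hle
        omega
      obtain ⟨u, huS, huC⟩ := hSC
      have hCeq : C = insert z (S.erase u) := by
        apply Finset.eq_of_subset_of_card_le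
        · intro x hx
          rcases Finset.mem_insert.1 (hCsub hx) with rfl | hxS
          · exact Finset.mem_insert_self _ _
          · refine Finset.mem_insert_of_mem (Finset.mem_erase.2 ⟨?_, hxS⟩)
            rintro rfl; exact huC hx
        · rw [Finset.card_insert_of_notMem (fun h => hzS (Finset.mem_of_mem_erase h)),
            Finset.card_erase_of_mem huS]
          have : 1 ≤ S.card := Finset.card_pos.2 ⟨u, huS⟩
          omega
      have : u ∈ X := harc u huS (hCeq ▸ hC)
      exact huC (hXC this)
    | succ n ih =>
      intro C hC hCsub hzC hXC hcard
      obtain ⟨x, hx, hxI⟩ := M.indep_aug hS hC (by omega)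
      rw [Finset.mem_sdiff] at hx
      refine ih (insert x C) hxI ?_ (Finset.mem_insert_of_mem hzC)
        (fun y hy => Finset.mem_insert_of_mem (hXC hy)) ?_
      · intro y hy
        rcases Finset.mem_insert.1 hy with rfl | hy
        · exact Finset.mem_insert_of_mem hx.1
        · exact hCsub hy
      · rw [Finset.card_insert_of_notMem hx.2]; omega
  -- initial set
  by_cases hXS : X = S
  · subst hXS
    exact hzIns hzX
  · have hXlt : X.card < S.card := Finset.card_lt_card (lt_of_le_of_ne hX hXS)
    have h1 : (insert z X).card = X.card + 1 :=
      Finset.card_insert_of_notMem (fun h => hzS (hX h))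
    exact grow (S.card - (X.card + 1)) (insert z X) hzX
      (Finset.insert_subset_insert _ hX) (Finset.mem_insert_self _ _)
      (Finset.subset_insert _ _) (by omega)



section Setting
variable {V : Type*} [DecidableEq V] [Fintype V] (M₁ M₂ : FinMatroid V) (S : Finset V)
  (vs : List V)

/-- All hypotheses about the shortest augmenting path, bundled. -/
structure Setting : Prop where
  hS₁ : M₁.Indep S
  hS₂ : M₂.Indep S
  hne : vs ≠ []
  hnd : vs.Nodup
  hchain : List.Chain' (exchangeAdj M₁ M₂ S) (XVert.src :: (vs.map XVert.elt ++ [XVert.snk]))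
  hshort : ddist (exchangeAdj M₁ M₂ S) XVert.src XVert.snk = ((vs.length + 1 : ℕ) : ℕ∞)

end Setting

section Setting2
variable {V : Type*} [DecidableEq V] [Fintype V] {M₁ M₂ : FinMatroid V} {S : Finset V}
  {vs : List V} (st : Setting M₁ M₂ S vs)
include st

lemma lpos : 0 < vs.length := List.length_pos_iff.2 st.hne

lemma adj_head : exchangeAdj M₁ M₂ S XVert.src (XVert.elt (vs[0]'(lpos st))) := by
  have := st.hchain
  rcases List.isChain_cons.1 this with ⟨h1, _⟩
  have h0 : (vs.map XVert.elt ++ [XVert.snk]).head? = some (XVert.elt (vs[0]'(lpos st))) := by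
    have : vs.map XVert.elt ≠ [] := by simp [st.hne]
    rw [List.head?_append_of_ne_nil _]
    · rw [List.head?_map]
      rw [List.head?_eq_head (st.hne)]
      simp [List.head_eq_getElem]
    · exact this
  exact h1 _ h0


lemma adj_step (i : ℕ) (h : i + 1 < vs.length) :
    exchangeAdj M₁ M₂ S (XVert.elt (vs[i]'(by omega))) (XVert.elt vs[i+1]) := by
  have hc := List.isChain_iff_getElem.1 st.hchain (i+1) (by simp; omega)
  have e1 : (XVert.src :: (vs.map XVert.elt ++ [XVert.snk])).get ⟨i+1, by simp; omega⟩
      = XVert.elt (vs[i]'(by omega)) := by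
    simp only [List.get_eq_getElem, List.getElem_cons_succ]
    rw [List.getElem_append_left (by simpa using (by omega : i < vs.length))]
    simp
  have e2 : (XVert.src :: (vs.map XVert.elt ++ [XVert.snk])).get ⟨i+1+1, by simp; omega⟩
      = XVert.elt vs[i+1] := by
    simp only [List.get_eq_getElem, List.getElem_cons_succ]
    rw [List.getElem_append_left (by simpa using h)]
    simp
  simp only [List.get_eq_getElem] at e1 e2
  rwa [e1, e2] at hc

lemma adj_last :
    exchangeAdj M₁ M₂ S (XVert.elt (vs[vs.length - 1]'(by have := lpos st; omega)))
      XVert.snk := by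
  have hl := lpos st
  have hc := List.isChain_iff_getElem.1 st.hchain vs.length (by simp)
  have e1 : (XVert.src :: (vs.map XVert.elt ++ [XVert.snk])).get ⟨vs.length, by simp⟩
      = XVert.elt (vs[vs.length - 1]'(by omega)) := by
    obtain ⟨n, hn⟩ : ∃ n, vs.length = n + 1 := ⟨vs.length - 1, by omega⟩
    simp only [List.get_eq_getElem, hn]
    simp only [List.getElem_cons_succ]
    rw [List.getElem_append_left (by simp [hn])]
    simp
  have e2 : (XVert.src :: (vs.map XVert.elt ++ [XVert.snk])).get ⟨vs.length+1, by simp⟩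
      = XVert.snk := by
    simp only [List.get_eq_getElem, List.getElem_cons_succ]
    rw [List.getElem_append_right (by simp)]
    simp
  simp only [List.get_eq_getElem] at e1 e2
  rwa [e1, e2] at hc

lemma mem_get : ∀ i, ∀ (_ : i < vs.length), (vs[i] ∈ S ↔ ¬ Even i) := by
  intro i
  induction i with
  | zero =>
    intro h
    have h0 := (adj_head st).1
    simp [h0]
  | succ n ih =>
    intro h
    have hstep := adj_step st n h
    rcases hstep with ⟨h1, h2, _⟩ | ⟨h1, h2, _⟩
    · have hn : ¬ Even n := (ih (by omega)).1 h1
      simp [h2, Nat.even_add_one, hn]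
    · have hn : Even n := by
        by_contra he
        exact h1 ((ih (by omega)).2 he)
      simp [h2, Nat.even_add_one, hn]

lemma last_even : Even (vs.length - 1) := by
  by_contra he
  exact (adj_last st).1 ((mem_get st _ (by have := lpos st; omega)).2 he)

lemma odd_succ_lt {i : ℕ} (h : i < vs.length) (ho : Odd i) : i + 1 < vs.length := by
  have hle := last_even st
  have hl := lpos st
  rw [Nat.even_iff] at hle
  rw [Nat.odd_iff] at ho
  omega

lemma reach_prefix : ∀ i, ∀ (_ : i < vs.length),
    reachIn (exchangeAdj M₁ M₂ S) (i+1) XVert.src (XVert.elt vs[i]) := by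
  intro i
  induction i with
  | zero => intro h; exact ⟨_, adj_head st, rfl⟩
  | succ n ih =>
    intro h
    exact reachIn_snoc (ih (by omega)) (adj_step st n h)

lemma reach_suffix_aux : ∀ j, ∀ (_ : j < vs.length),
    reachIn (exchangeAdj M₁ M₂ S) (j+1)
      (XVert.elt (vs[vs.length - 1 - j]'(by omega))) XVert.snk := by
  intro j
  induction j with
  | zero => intro h; exact ⟨_, by simpa using adj_last st, rfl⟩
  | succ n ih =>
    intro h
    have he : vs.length - 1 - (n+1) + 1 = vs.length - 1 - n := by omega
    have hlt : vs.length - 1 - (n+1) + 1 < vs.length := by omega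
    have hadj := adj_step st (vs.length - 1 - (n+1)) hlt
    refine ⟨_, hadj, ?_⟩
    have ihn := ih (by omega)
    have hcast : ∀ (j : ℕ) (hj : j < vs.length) (hje : j = vs.length - 1 - n),
        reachIn (exchangeAdj M₁ M₂ S) (n+1) (XVert.elt (vs[j]'hj)) XVert.snk := by
      rintro j hj rfl
      exact ih (by omega)
    exact hcast _ hlt he

omit st in
lemma gelem_congr {α : Type*} {l : List α} {i j : ℕ} (h : i = j) (hi : i < l.length) :
    l[i]'hi = l[j]'(h ▸ hi) := by cases h; rfl

lemma d_snk_lb : ∀ m, reachIn (exchangeAdj M₁ M₂ S) m XVert.src XVert.snk →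
    vs.length + 1 ≤ m := by
  intro m hm
  have h1 := ddist_le_of_reachIn hm
  rw [st.hshort] at h1
  exact_mod_cast h1

lemma d_get (i : ℕ) (h : i < vs.length) :
    ddist (exchangeAdj M₁ M₂ S) XVert.src (XVert.elt vs[i]) = ((i+1 : ℕ) : ℕ∞) := by
  apply le_antisymm
  · exact ddist_le_of_reachIn (reach_prefix st i h)
  · apply le_ddist
    intro m hm
    have hsuf := reach_suffix_aux st (vs.length - 1 - i) (by omega)
    have hidx : vs.length - 1 - (vs.length - 1 - i) = i := by omega
    rw [gelem_congr hidx] at hsuf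
    have hall := reachIn_append hm hsuf
    have := d_snk_lb st _ hall
    have : i + 1 ≤ m := by omega
    exact_mod_cast this

lemma d_elt_ge_one (x : V) : 1 ≤ ddist (exchangeAdj M₁ M₂ S) XVert.src (XVert.elt x) := by
  apply le_ddist
  intro m hm
  match m, hm with
  | 0, hm => exact absurd hm (by rintro ⟨⟩)
  | n+1, _ => exact_mod_cast Nat.succ_le_succ (Nat.zero_le n)

lemma hd1 {w : V} (h1 : w ∉ S) (h2 : M₁.Indep (insert w S)) :
    ddist (exchangeAdj M₁ M₂ S) XVert.src (XVert.elt w) ≤ 1 := by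
  have hadj : exchangeAdj M₁ M₂ S XVert.src (XVert.elt w) := ⟨h1, h2⟩
  have hr : reachIn (exchangeAdj M₁ M₂ S) 1 XVert.src (XVert.elt w) :=
    ⟨XVert.elt w, hadj, rfl⟩
  simpa using ddist_le_of_reachIn hr

lemma hd2 {u w : V} (hu : u ∈ S) (hw : w ∉ S) (h : M₁.Indep (insert w (S.erase u))) :
    ddist (exchangeAdj M₁ M₂ S) XVert.src (XVert.elt w)
      ≤ ddist (exchangeAdj M₁ M₂ S) XVert.src (XVert.elt u) + 1 :=
  ddist_step (Or.inl ⟨hu, hw, h⟩)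

lemma hd3 {u w : V} (hw : w ∉ S) (hu : u ∈ S) (h : M₂.Indep (insert w (S.erase u))) :
    ddist (exchangeAdj M₁ M₂ S) XVert.src (XVert.elt u)
      ≤ ddist (exchangeAdj M₁ M₂ S) XVert.src (XVert.elt w) + 1 :=
  ddist_step (Or.inr ⟨hw, hu, h⟩)

lemma hd4 {w : V} (hw : w ∉ S) (h : M₂.Indep (insert w S)) :
    ((vs.length + 1 : ℕ) : ℕ∞) ≤ ddist (exchangeAdj M₁ M₂ S) XVert.src (XVert.elt w) + 1 := by
  have h1 : ddist (exchangeAdj M₁ M₂ S) XVert.src XVert.snk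
      ≤ ddist (exchangeAdj M₁ M₂ S) XVert.src (XVert.elt w) + 1 := ddist_step ⟨hw, h⟩
  rwa [st.hshort] at h1

omit st in
lemma getD_eq {i : ℕ} (h : i < vs.length) (y : V) : vs.getD i y = vs[i] := by
  simp [List.getD_eq_getElem?_getD, List.getElem?_eq_getElem h]

section SPrime
variable {S' : Finset V} (hS' : S' = symmDiff S vs.toFinset)
include hS'

omit st in
lemma mem_S'_iff (x : V) :
    x ∈ S' ↔ ((x ∈ S ∧ x ∉ vs.toFinset) ∨ (x ∉ S ∧ x ∈ vs.toFinset)) := by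
  subst hS'
  rw [Finset.mem_symmDiff]
  tauto

lemma getElem_mem_S' {i : ℕ} (h : i < vs.length) : vs[i] ∈ S' ↔ Even i := by
  have hv : vs[i] ∈ vs.toFinset := by
    rw [List.mem_toFinset]
    exact List.getElem_mem h
  rw [mem_S'_iff hS']
  have hm := mem_get st i h
  constructor
  · rintro (⟨_, hnv⟩ | ⟨hns, _⟩)
    · exact absurd hv hnv
    · by_contra he
      exact hns (hm.2 (by simpa [Nat.even_iff, Nat.odd_iff] using he))
  · intro he
    exact Or.inr ⟨fun hs => (hm.1 hs) he, hv⟩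

lemma mem_S_not_S' {x : V} (hx : x ∈ S) (hx' : x ∉ S') :
    ∃ i, ∃ (h : i < vs.length), Odd i ∧ x = vs[i] := by
  have hxv : x ∈ vs.toFinset := by
    by_contra hnv
    exact hx' ((mem_S'_iff hS' x).2 (Or.inl ⟨hx, hnv⟩))
  obtain ⟨i, h, hi⟩ := List.mem_iff_getElem.1 (List.mem_toFinset.1 hxv)
  refine ⟨i, h, ?_, hi.symm⟩
  rw [Nat.odd_iff, ← Nat.not_even_iff]
  intro he
  exact hx' (hi ▸ (getElem_mem_S' st hS' h).2 he)

lemma up {k : ℕ} {b : V} {T : Finset V}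
    (hT : M₁.Indep T)
    (hsub : ∀ x ∈ S', ((k:ℕ∞)+1) ≤ ddist (exchangeAdj M₁ M₂ S) XVert.src (XVert.elt x) → x ∈ T)
    (hbT : b ∈ T) (hbS' : b ∉ S')
    (hbd : ((k:ℕ∞)+2) ≤ ddist (exchangeAdj M₁ M₂ S) XVert.src (XVert.elt b)) : False := by
  classical
  set d : V → ℕ∞ := fun x => ddist (exchangeAdj M₁ M₂ S) XVert.src (XVert.elt x) with hd
  set X : Finset V := S.filter (fun u => ((k:ℕ∞)+1) ≤ d u) with hX
  set J : Finset ℕ := (Finset.range vs.length).filter (fun i => Odd i ∧ k ≤ i) with hJ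
  have hXsub : X ⊆ S := Finset.filter_subset _ _
  have hJfact : ∀ i ∈ J, i < vs.length ∧ Odd i ∧ k ≤ i := by
    intro i hi
    simp only [hJ, Finset.mem_filter, Finset.mem_range] at hi
    exact ⟨hi.1, hi.2.1, hi.2.2⟩
  have hJlt : ∀ i ∈ J, i + 1 < vs.length := by
    intro i hi
    obtain ⟨h1, h2, _⟩ := hJfact i hi
    exact odd_succ_lt st h1 h2
  set A : Finset V := (X.filter (fun x => x ∉ vs.toFinset)) ∪ J.image (fun i => vs.getD (i+1) b)
      ∪ {b} with hA
  have hk12 : ((k:ℕ∞)+1) ≤ (k:ℕ∞)+2 := add_le_add_right (by norm_num) _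
  -- facts about image elements
  have himg : ∀ i, ∀ (hi : i ∈ J), vs.getD (i+1) b = vs[i+1]'(hJlt i hi) :=
    fun i hi => getD_eq (hJlt i hi) b
  have himgS : ∀ i, ∀ (hi : i ∈ J), vs[i+1]'(hJlt i hi) ∉ S := by
    intro i hi hmem
    have h1 := (mem_get st (i+1) (hJlt i hi)).1 hmem
    have hodd := (hJfact i hi).2.1
    rw [Nat.odd_iff] at hodd
    apply h1
    rw [Nat.even_iff]
    omega
  have himgS' : ∀ i, ∀ (hi : i ∈ J), vs[i+1]'(hJlt i hi) ∈ S' := by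
    intro i hi
    rw [getElem_mem_S' st hS' (hJlt i hi), Nat.even_add_one, Nat.not_even_iff_odd]
    exact (hJfact i hi).2.1
  have himgd2 : ∀ i, ∀ (hi : i ∈ J), ((k:ℕ∞)+2) ≤ d (vs[i+1]'(hJlt i hi)) := by
    intro i hi
    have hdx := d_get st (i+1) (hJlt i hi)
    show ((k:ℕ∞)+2) ≤ ddist (exchangeAdj M₁ M₂ S) XVert.src (XVert.elt (vs[i+1]'(hJlt i hi)))
    rw [hdx]
    have hk : k + 2 ≤ i + 1 + 1 := by have := (hJfact i hi).2.2; omega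
    exact_mod_cast hk
  -- A is contained in T
  have hAT : A ⊆ T := by
    intro x hx
    simp only [hA, Finset.mem_union, Finset.mem_singleton] at hx
    rcases hx with (hx | hx) | hx
    · obtain ⟨hxX, hxnv⟩ := Finset.mem_filter.1 hx
      obtain ⟨hxS, hxd⟩ := Finset.mem_filter.1 hxX
      exact hsub x ((mem_S'_iff hS' x).2 (Or.inl ⟨hxS, hxnv⟩)) hxd
    · obtain ⟨i, hi, rfl⟩ := Finset.mem_image.1 hx
      rw [himg i hi]
      exact hsub _ (himgS' i hi) (le_trans hk12 (himgd2 i hi))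
    · exact hx ▸ hbT
  have hAindep : M₁.Indep A := M₁.indep_subset hT hAT
  -- lemR hypotheses
  have hB : ∀ w, (w ∉ S ∧ ((k:ℕ∞)+2) ≤ d w) → w ∉ S ∧ ¬ M₁.Indep (insert w S) ∧
      ∀ u ∈ S, M₁.Indep (insert w (S.erase u)) → u ∈ X := by
    rintro w ⟨hwS, hwd⟩
    refine ⟨hwS, ?_, ?_⟩
    · intro hindep
      have h1 : d w ≤ 1 := hd1 st hwS hindep
      have h2 : ((k:ℕ∞)+2) ≤ 1 := le_trans hwd h1
      have h3 : (2:ℕ∞) ≤ 1 := le_trans le_add_self h2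
      norm_num at h3
    · intro u hu harc
      have h2 : d w ≤ d u + 1 := hd2 st hu hwS harc
      have he : ((k:ℕ∞)+1) + 1 = (k:ℕ∞) + 2 := by
        rw [add_assoc]
        norm_num
      have h3 : ((k:ℕ∞)+1) + 1 ≤ d u + 1 := by
        rw [he]
        exact hwd.trans h2
      have h4 := (WithTop.add_le_add_iff_right (by simp : (1:ℕ∞) ≠ ⊤)).1 h3
      exact Finset.mem_filter.2 ⟨hu, h4⟩
  have hAXB : ∀ x ∈ A, x ∈ X ∨ (x ∉ S ∧ ((k:ℕ∞)+2) ≤ d x) := by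
    intro x hx
    simp only [hA, Finset.mem_union, Finset.mem_singleton] at hx
    rcases hx with (hx | hx) | hx
    · exact Or.inl (Finset.mem_of_mem_filter _ hx)
    · obtain ⟨i, hi, rfl⟩ := Finset.mem_image.1 hx
      rw [himg i hi]
      exact Or.inr ⟨himgS i hi, himgd2 i hi⟩
    · subst hx
      by_cases hbS : x ∈ S
      · exact Or.inl (Finset.mem_filter.2 ⟨hbS, le_trans hk12 hbd⟩)
      · exact Or.inr ⟨hbS, hbd⟩
  have hlemR := lemR M₁ st.hS₁ hXsub hAindep _ hB hAXB
  -- cardinality computation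
  have hinj2 : Set.InjOn (fun i => vs.getD (i+1) b) J := by
    intro i hi j hj hij
    simp only at hij
    rw [himg i hi, himg j hj] at hij
    have := (st.hnd.getElem_inj_iff).1 hij
    omega
  have hinj1 : Set.InjOn (fun i => vs.getD i b) J := by
    intro i hi j hj hij
    simp only at hij
    rw [getD_eq (hJfact i hi).1 b, getD_eq (hJfact j hj).1 b] at hij
    exact (st.hnd.getElem_inj_iff).1 hij
  have hXon : X.filter (fun x => x ∈ vs.toFinset) = J.image (fun i => vs.getD i b) := by
    apply Finset.ext
    intro x
    constructor
    · intro hx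
      obtain ⟨hxX, hxv⟩ := Finset.mem_filter.1 hx
      obtain ⟨hxS, hxd⟩ := Finset.mem_filter.1 hxX
      obtain ⟨i, h, hi⟩ := List.mem_iff_getElem.1 (List.mem_toFinset.1 hxv)
      have hodd : Odd i := by
        rw [Nat.odd_iff, ← Nat.not_even_iff]
        intro he
        exact (mem_get st i h).1 (by rw [hi]; exact hxS) he
      have hki : k ≤ i := by
        have hdx := d_get st i h
        have h2 : ((k:ℕ∞)+1) ≤ ((i+1:ℕ):ℕ∞) := by
          rw [← hdx, hi]
          exact hxd
        have h3 : k + 1 ≤ i + 1 := by exact_mod_cast h2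
        omega
      exact Finset.mem_image.2 ⟨i, Finset.mem_filter.2 ⟨Finset.mem_range.2 h, hodd, hki⟩,
        by rw [getD_eq h b]; exact hi⟩
    · intro hx
      obtain ⟨i, hi, rfl⟩ := Finset.mem_image.1 hx
      obtain ⟨h, hodd, hki⟩ := hJfact i hi
      have hg : vs.getD i b = vs[i] := getD_eq h b
      rw [Finset.mem_filter, hg]
      refine ⟨Finset.mem_filter.2 ⟨(mem_get st i h).2 (Nat.not_even_iff_odd.2 hodd), ?_⟩,
        List.mem_toFinset.2 (List.getElem_mem h)⟩
      show ((k:ℕ∞)+1) ≤ ddist (exchangeAdj M₁ M₂ S) XVert.src (XVert.elt vs[i])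
      rw [d_get st i h]
      have h3 : k + 1 ≤ i + 1 := by omega
      exact_mod_cast h3
  have hcard1 : (X.filter (fun x => x ∈ vs.toFinset)).card = J.card := by
    rw [hXon, Finset.card_image_of_injOn hinj1]
  have hcardX : X.card = (X.filter (fun x => x ∉ vs.toFinset)).card + J.card := by
    rw [← hcard1, add_comm]
    exact (Finset.card_filter_add_card_filter_not
      (p := fun x => x ∈ vs.toFinset)).symm
  have hdisj1 : Disjoint (X.filter (fun x => x ∉ vs.toFinset))
      (J.image (fun i => vs.getD (i+1) b)) := by
    rw [Finset.disjoint_left]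
    intro x hx hx2
    obtain ⟨i, hi, hieq⟩ := Finset.mem_image.1 hx2
    apply (Finset.mem_filter.1 hx).2
    rw [← hieq, himg i hi, List.mem_toFinset]
    exact List.getElem_mem _
  have hdisj2 : Disjoint ((X.filter (fun x => x ∉ vs.toFinset))
      ∪ J.image (fun i => vs.getD (i+1) b)) ({b} : Finset V) := by
    rw [Finset.disjoint_right]
    intro x hx
    rw [Finset.mem_singleton] at hx
    subst hx
    rw [Finset.mem_union]
    rintro (hx | hx)
    · obtain ⟨hxX, hxnv⟩ := Finset.mem_filter.1 hx
      obtain ⟨hxS, _⟩ := Finset.mem_filter.1 hxX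
      exact hbS' ((mem_S'_iff hS' _).2 (Or.inl ⟨hxS, hxnv⟩))
    · obtain ⟨i, hi, hieq⟩ := Finset.mem_image.1 hx
      apply hbS'
      rw [← hieq, himg i hi]
      exact himgS' i hi
  have hcardA : A.card = X.card + 1 := by
    rw [hA, Finset.card_union_of_disjoint hdisj2, Finset.card_union_of_disjoint hdisj1,
      Finset.card_image_of_injOn hinj2, Finset.card_singleton, hcardX]
  omega

lemma down {k : ℕ} {a : V} {T : Finset V} (hk : k + 1 ≤ vs.length)
    (hT : M₂.Indep T)
    (hsub : ∀ x ∈ S', ddist (exchangeAdj M₁ M₂ S) XVert.src (XVert.elt x) ≤ ((k:ℕ∞)+1) → x ∈ T)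
    (haT : a ∈ T) (haS' : a ∉ S')
    (had : ddist (exchangeAdj M₁ M₂ S) XVert.src (XVert.elt a) ≤ (k:ℕ∞)) : False := by
  classical
  set d : V → ℕ∞ := fun x => ddist (exchangeAdj M₁ M₂ S) XVert.src (XVert.elt x) with hd
  set X : Finset V := S.filter (fun u => d u ≤ ((k:ℕ∞)+1)) with hX
  set J : Finset ℕ := (Finset.range vs.length).filter (fun i => Odd i ∧ i ≤ k) with hJ
  have hXsub : X ⊆ S := Finset.filter_subset _ _
  have hJfact : ∀ i ∈ J, i < vs.length ∧ Odd i ∧ i ≤ k := by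
    intro i hi
    simp only [hJ, Finset.mem_filter, Finset.mem_range] at hi
    exact ⟨hi.1, hi.2.1, hi.2.2⟩
  have hJlt : ∀ i ∈ J, i - 1 < vs.length := by
    intro i hi
    have := (hJfact i hi).1
    omega
  have hJpos : ∀ i ∈ J, 1 ≤ i := by
    intro i hi
    have := (hJfact i hi).2.1
    rw [Nat.odd_iff] at this
    omega
  set A : Finset V := (X.filter (fun x => x ∉ vs.toFinset)) ∪ J.image (fun i => vs.getD (i-1) a)
      ∪ {a} with hA
  have hkk1 : (k:ℕ∞) ≤ (k:ℕ∞)+1 := le_add_right (le_refl _)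
  -- facts about image elements
  have himg : ∀ i, ∀ (hi : i ∈ J), vs.getD (i-1) a = vs[i-1]'(hJlt i hi) :=
    fun i hi => getD_eq (hJlt i hi) a
  have himgS : ∀ i, ∀ (hi : i ∈ J), vs[i-1]'(hJlt i hi) ∉ S := by
    intro i hi hmem
    have h1 := (mem_get st (i-1) (hJlt i hi)).1 hmem
    have hodd := (hJfact i hi).2.1
    have hp := hJpos i hi
    rw [Nat.odd_iff] at hodd
    apply h1
    rw [Nat.even_iff]
    omega
  have himgS' : ∀ i, ∀ (hi : i ∈ J), vs[i-1]'(hJlt i hi) ∈ S' := by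
    intro i hi
    rw [getElem_mem_S' st hS' (hJlt i hi)]
    have hodd := (hJfact i hi).2.1
    have hp := hJpos i hi
    rw [Nat.odd_iff] at hodd
    rw [Nat.even_iff]
    omega
  have himgd2 : ∀ i, ∀ (hi : i ∈ J), d (vs[i-1]'(hJlt i hi)) ≤ (k:ℕ∞) := by
    intro i hi
    have hdx := d_get st (i-1) (hJlt i hi)
    show ddist (exchangeAdj M₁ M₂ S) XVert.src (XVert.elt (vs[i-1]'(hJlt i hi))) ≤ (k:ℕ∞)
    rw [hdx]
    have hik : i - 1 + 1 ≤ k := by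
      have h1 := (hJfact i hi).2.2
      have h2 := hJpos i hi
      omega
    exact_mod_cast hik
  -- A is contained in T
  have hAT : A ⊆ T := by
    intro x hx
    simp only [hA, Finset.mem_union, Finset.mem_singleton] at hx
    rcases hx with (hx | hx) | hx
    · obtain ⟨hxX, hxnv⟩ := Finset.mem_filter.1 hx
      obtain ⟨hxS, hxd⟩ := Finset.mem_filter.1 hxX
      exact hsub x ((mem_S'_iff hS' x).2 (Or.inl ⟨hxS, hxnv⟩)) hxd
    · obtain ⟨i, hi, rfl⟩ := Finset.mem_image.1 hx
      rw [himg i hi]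
      exact hsub _ (himgS' i hi) (le_trans (himgd2 i hi) hkk1)
    · exact hx ▸ haT
  have hAindep : M₂.Indep A := M₂.indep_subset hT hAT
  -- lemR hypotheses
  have hB : ∀ w, (w ∉ S ∧ d w ≤ (k:ℕ∞)) → w ∉ S ∧ ¬ M₂.Indep (insert w S) ∧
      ∀ u ∈ S, M₂.Indep (insert w (S.erase u)) → u ∈ X := by
    rintro w ⟨hwS, hwd⟩
    refine ⟨hwS, ?_, ?_⟩
    · intro hindep
      have h1 := hd4 st hwS hindep
      have h2 : ((vs.length + 1 : ℕ):ℕ∞) ≤ (k:ℕ∞) + 1 :=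
        le_trans h1 (add_le_add_left hwd 1)
      have h3 : ((vs.length + 1 : ℕ):ℕ∞) ≤ ((k+1:ℕ):ℕ∞) := by
        rw [Nat.cast_add, Nat.cast_one]
        exact h2
      have h4 : vs.length + 1 ≤ k + 1 := by exact_mod_cast h3
      omega
    · intro u hu harc
      have h2 : d u ≤ d w + 1 := hd3 st hwS hu harc
      have h3 : d u ≤ (k:ℕ∞) + 1 := le_trans h2 (add_le_add_left hwd 1)
      exact Finset.mem_filter.2 ⟨hu, h3⟩
  have hAXB : ∀ x ∈ A, x ∈ X ∨ (x ∉ S ∧ d x ≤ (k:ℕ∞)) := by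
    intro x hx
    simp only [hA, Finset.mem_union, Finset.mem_singleton] at hx
    rcases hx with (hx | hx) | hx
    · exact Or.inl (Finset.mem_of_mem_filter _ hx)
    · obtain ⟨i, hi, rfl⟩ := Finset.mem_image.1 hx
      rw [himg i hi]
      exact Or.inr ⟨himgS i hi, himgd2 i hi⟩
    · subst hx
      by_cases haS : x ∈ S
      · exact Or.inl (Finset.mem_filter.2 ⟨haS, le_trans had hkk1⟩)
      · exact Or.inr ⟨haS, had⟩
  have hlemR := lemR M₂ st.hS₂ hXsub hAindep _ hB hAXB
  -- cardinality computation
  have hinj2 : Set.InjOn (fun i => vs.getD (i-1) a) J := by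
    intro i hi j hj hij
    simp only at hij
    rw [himg i hi, himg j hj] at hij
    have h1 := (st.hnd.getElem_inj_iff).1 hij
    have h2 := hJpos i hi
    have h3 := hJpos j hj
    omega
  have hinj1 : Set.InjOn (fun i => vs.getD i a) J := by
    intro i hi j hj hij
    simp only at hij
    rw [getD_eq (hJfact i hi).1 a, getD_eq (hJfact j hj).1 a] at hij
    exact (st.hnd.getElem_inj_iff).1 hij
  have hXon : X.filter (fun x => x ∈ vs.toFinset) = J.image (fun i => vs.getD i a) := by
    apply Finset.ext
    intro x
    constructor
    · intro hx
      obtain ⟨hxX, hxv⟩ := Finset.mem_filter.1 hx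
      obtain ⟨hxS, hxd⟩ := Finset.mem_filter.1 hxX
      obtain ⟨i, h, hi⟩ := List.mem_iff_getElem.1 (List.mem_toFinset.1 hxv)
      have hodd : Odd i := by
        rw [Nat.odd_iff, ← Nat.not_even_iff]
        intro he
        exact (mem_get st i h).1 (by rw [hi]; exact hxS) he
      have hki : i ≤ k := by
        have hdx := d_get st i h
        have h2 : ((i+1:ℕ):ℕ∞) ≤ ((k:ℕ∞)+1) := by
          rw [← hdx, hi]
          exact hxd
        have h3 : ((i+1:ℕ):ℕ∞) ≤ ((k+1:ℕ):ℕ∞) := by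
          rw [Nat.cast_add, Nat.cast_one]
          exact h2
        have h4 : i + 1 ≤ k + 1 := by exact_mod_cast h3
        omega
      exact Finset.mem_image.2 ⟨i, Finset.mem_filter.2 ⟨Finset.mem_range.2 h, hodd, hki⟩,
        by rw [getD_eq h a]; exact hi⟩
    · intro hx
      obtain ⟨i, hi, rfl⟩ := Finset.mem_image.1 hx
      obtain ⟨h, hodd, hki⟩ := hJfact i hi
      have hg : vs.getD i a = vs[i] := getD_eq h a
      rw [Finset.mem_filter, hg]
      refine ⟨Finset.mem_filter.2 ⟨(mem_get st i h).2 (Nat.not_even_iff_odd.2 hodd), ?_⟩,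
        List.mem_toFinset.2 (List.getElem_mem h)⟩
      show ddist (exchangeAdj M₁ M₂ S) XVert.src (XVert.elt vs[i]) ≤ ((k:ℕ∞)+1)
      rw [d_get st i h]
      have h3 : ((i+1:ℕ):ℕ∞) ≤ ((k+1:ℕ):ℕ∞) := by exact_mod_cast (by omega : i + 1 ≤ k + 1)
      rw [Nat.cast_add, Nat.cast_one] at h3
      exact h3
  have hcard1 : (X.filter (fun x => x ∈ vs.toFinset)).card = J.card := by
    rw [hXon, Finset.card_image_of_injOn hinj1]
  have hcardX : X.card = (X.filter (fun x => x ∉ vs.toFinset)).card + J.card := by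
    rw [← hcard1, add_comm]
    exact (Finset.card_filter_add_card_filter_not
      (p := fun x => x ∈ vs.toFinset)).symm
  have hdisj1 : Disjoint (X.filter (fun x => x ∉ vs.toFinset))
      (J.image (fun i => vs.getD (i-1) a)) := by
    rw [Finset.disjoint_left]
    intro x hx hx2
    obtain ⟨i, hi, hieq⟩ := Finset.mem_image.1 hx2
    apply (Finset.mem_filter.1 hx).2
    rw [← hieq, himg i hi, List.mem_toFinset]
    exact List.getElem_mem _
  have hdisj2 : Disjoint ((X.filter (fun x => x ∉ vs.toFinset))
      ∪ J.image (fun i => vs.getD (i-1) a)) ({a} : Finset V) := by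
    rw [Finset.disjoint_right]
    intro x hx
    rw [Finset.mem_singleton] at hx
    subst hx
    rw [Finset.mem_union]
    rintro (hx | hx)
    · obtain ⟨hxX, hxnv⟩ := Finset.mem_filter.1 hx
      obtain ⟨hxS, _⟩ := Finset.mem_filter.1 hxX
      exact haS' ((mem_S'_iff hS' _).2 (Or.inl ⟨hxS, hxnv⟩))
    · obtain ⟨i, hi, hieq⟩ := Finset.mem_image.1 hx
      apply haS'
      rw [← hieq, himg i hi]
      exact himgS' i hi
  have hcardA : A.card = X.card + 1 := by
    rw [hA, Finset.card_union_of_disjoint hdisj2, Finset.card_union_of_disjoint hdisj1,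
      Finset.card_image_of_injOn hinj2, Finset.card_singleton, hcardX]
  omega

lemma step_lemma (hS'₁ : M₁.Indep S') (hS'₂ : M₂.Indep S') {u x : XVert V}
    (h : exchangeAdj M₁ M₂ S' u x) :
    min (ddist (exchangeAdj M₁ M₂ S) XVert.src x) ((vs.length + 1 : ℕ) : ℕ∞)
      ≤ min (ddist (exchangeAdj M₁ M₂ S) XVert.src u) ((vs.length + 1 : ℕ) : ℕ∞) + 1 := by
  classical
  set d : XVert V → ℕ∞ := ddist (exchangeAdj M₁ M₂ S) XVert.src with hd
  set L : ℕ∞ := ((vs.length + 1 : ℕ) : ℕ∞) with hL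
  have hLcast : L = ((vs.length : ℕ) : ℕ∞) + 1 := by
    rw [hL]
    push_cast
    ring
  have hhigh : ∀ (y : XVert V), ((vs.length : ℕ) : ℕ∞) ≤ d y →
      min (d x) L ≤ min (d y) L + 1 := by
    intro y hy
    have h1 : ((vs.length:ℕ):ℕ∞) ≤ min (d y) L := by
      refine le_min hy ?_
      rw [hLcast]
      exact le_add_right (le_refl _)
    have h2 : L ≤ min (d y) L + 1 := by
      rw [hLcast]
      exact add_le_add_left h1 1
    exact le_trans (min_le_right _ _) h2
  cases u with
  | snk => exact h.elim
  | src =>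
    cases x with
    | src => exact h.elim
    | snk => exact h.elim
    | elt b =>
      obtain ⟨hb1, hb2⟩ := h
      have h0 : d XVert.src = 0 := ddist_self _
      have hdb : d (XVert.elt b) ≤ 1 := by
        by_contra hbig
        push_neg at hbig
        have hbd : ((0:ℕ∞)+2) ≤ d (XVert.elt b) := by
          have h3 : (1:ℕ∞) + 1 ≤ d (XVert.elt b) :=
            (ENat.add_one_le_iff WithTop.one_ne_top).2 hbig
          refine le_trans (le_of_eq ?_) h3
          norm_num
        exact up st hS' hb2 (fun x hx _ => Finset.mem_insert_of_mem hx)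
          (Finset.mem_insert_self _ _) hb1 (by exact_mod_cast hbd)
      rw [h0]
      have : min (0:ℕ∞) L = 0 := min_eq_left zero_le
      rw [this, zero_add]
      exact le_trans (min_le_left _ _) hdb
  | elt a =>
    by_cases hcase : ((vs.length : ℕ) : ℕ∞) ≤ d (XVert.elt a)
    · exact hhigh _ hcase
    · push_neg at hcase
      have hne : d (XVert.elt a) ≠ ⊤ := ne_top_of_lt hcase
      obtain ⟨k, hkeq⟩ : ∃ k : ℕ, d (XVert.elt a) = (k : ℕ∞) := by
        lift d (XVert.elt a) to ℕ using hne with k hk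
        exact ⟨k, rfl⟩
      have hkl : k < vs.length := by
        rw [hkeq] at hcase
        exact_mod_cast hcase
      have hmin_a : min (d (XVert.elt a)) L = (k:ℕ∞) := by
        rw [hkeq]
        refine min_eq_left ?_
        rw [hLcast]
        have h5 : ((k:ℕ):ℕ∞) ≤ ((vs.length:ℕ):ℕ∞) + 1 := by
          have : k ≤ vs.length + 1 := by omega
          exact_mod_cast this
        exact h5
      cases x with
      | src => exact h.elim
      | snk =>
        obtain ⟨ha1, ha2⟩ := h
        exact (down st hS' (by omega : k + 1 ≤ vs.length) ha2
          (fun x hx _ => Finset.mem_insert_of_mem hx) (Finset.mem_insert_self _ _) ha1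
          (le_of_eq hkeq)).elim
      | elt b =>
        rcases h with ⟨ha1, hb1, hi⟩ | ⟨ha1, hb1, hi⟩
        · -- M₁-type arc
          have hdb : d (XVert.elt b) ≤ (k:ℕ∞)+1 := by
            by_contra hbig
            push_neg at hbig
            have hbd : ((k:ℕ∞)+2) ≤ d (XVert.elt b) := by
              have h3 : ((k:ℕ∞) + 1) + 1 ≤ d (XVert.elt b) :=
                (ENat.add_one_le_iff
                  (WithTop.add_ne_top.2 ⟨ENat.coe_ne_top k, WithTop.one_ne_top⟩)).2 hbig
              refine le_trans (le_of_eq ?_) h3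
              rw [add_assoc]
              norm_num
            refine up st hS' hi ?_ (Finset.mem_insert_self _ _) hb1 hbd
            intro y hy hdy
            refine Finset.mem_insert_of_mem (Finset.mem_erase.2 ⟨?_, hy⟩)
            rintro rfl
            have h6 : ((k:ℕ∞)+1) ≤ (k:ℕ∞) := hdy.trans (le_of_eq hkeq)
            exact absurd h6 (by exact_mod_cast Nat.not_succ_le_self k)
          rw [hmin_a]
          exact le_trans (min_le_left _ _) hdb
        · -- M₂-type arc
          have hdb : d (XVert.elt b) ≤ (k:ℕ∞)+1 := by
            by_contra hbig
            push_neg at hbig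
            refine down st hS' (by omega : k + 1 ≤ vs.length) hi ?_
              (Finset.mem_insert_self _ _) ha1 (le_of_eq hkeq)
            intro y hy hdy
            refine Finset.mem_insert_of_mem (Finset.mem_erase.2 ⟨?_, hy⟩)
            rintro rfl
            exact absurd hdy (not_le.2 hbig)
          rw [hmin_a]
          exact le_trans (min_le_left _ _) hdb

lemma master (hS'₁ : M₁.Indep S') (hS'₂ : M₂.Indep S') (x : XVert V) :
    min (ddist (exchangeAdj M₁ M₂ S) XVert.src x) ((vs.length + 1 : ℕ) : ℕ∞)
      ≤ ddist (exchangeAdj M₁ M₂ S') XVert.src x := by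
  apply le_ddist
  intro m
  induction m generalizing x with
  | zero =>
    intro h
    have h' : XVert.src = x := h
    subst h'
    rw [ddist_self]
    simp
  | succ n ih =>
    intro hr
    obtain ⟨y, hy, hadj⟩ := reachIn_succ_iff.1 hr
    calc min (ddist (exchangeAdj M₁ M₂ S) XVert.src x) ((vs.length + 1 : ℕ) : ℕ∞)
        ≤ min (ddist (exchangeAdj M₁ M₂ S) XVert.src y) ((vs.length + 1 : ℕ) : ℕ∞) + 1 :=
          step_lemma st hS' hS'₁ hS'₂ hadj
      _ ≤ (n:ℕ∞) + 1 := add_le_add_left (ih y hy) 1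
      _ = ((n+1:ℕ):ℕ∞) := by push_cast; ring

end SPrime
end Setting2
end XAux

/-- Monotonicity lemma for matroid intersection: after augmenting along a shortest
`(s,t)`-path, distances from `s` and to `t` do not decrease (below the old `d(s,t)`). -/
theorem monotonicity_matroid_intersection {V : Type*} [DecidableEq V] [Fintype V]
    (M₁ M₂ : FinMatroid V) (S : Finset V) (hS₁ : M₁.Indep S) (hS₂ : M₂.Indep S)
    (vs : List V) (hne : vs ≠ []) (hnd : vs.Nodup)
    (hchain : List.Chain' (exchangeAdj M₁ M₂ S)
      (XVert.src :: (vs.map XVert.elt ++ [XVert.snk])))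
    (hshort : ddist (exchangeAdj M₁ M₂ S) XVert.src XVert.snk = ((vs.length + 1 : ℕ) : ℕ∞))
    (S' : Finset V) (hS' : S' = symmDiff S vs.toFinset)
    (hS'₁ : M₁.Indep S') (hS'₂ : M₂.Indep S') :
    ∀ v : V,
      (ddist (exchangeAdj M₁ M₂ S) XVert.src (XVert.elt v)
          < ddist (exchangeAdj M₁ M₂ S) XVert.src XVert.snk →
        ddist (exchangeAdj M₁ M₂ S) XVert.src (XVert.elt v)
          ≤ ddist (exchangeAdj M₁ M₂ S') XVert.src (XVert.elt v)) ∧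
      (ddist (exchangeAdj M₁ M₂ S) (XVert.elt v) XVert.snk
          < ddist (exchangeAdj M₁ M₂ S) XVert.src XVert.snk →
        ddist (exchangeAdj M₁ M₂ S) (XVert.elt v) XVert.snk
          ≤ ddist (exchangeAdj M₁ M₂ S') (XVert.elt v) XVert.snk) ∧
      (ddist (exchangeAdj M₁ M₂ S) XVert.src XVert.snk
          ≤ ddist (exchangeAdj M₁ M₂ S) XVert.src (XVert.elt v) →
        ddist (exchangeAdj M₁ M₂ S) XVert.src XVert.snk
          ≤ ddist (exchangeAdj M₁ M₂ S') XVert.src (XVert.elt v)) ∧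
      (ddist (exchangeAdj M₁ M₂ S) XVert.src XVert.snk
          ≤ ddist (exchangeAdj M₁ M₂ S) (XVert.elt v) XVert.snk →
        ddist (exchangeAdj M₁ M₂ S) XVert.src XVert.snk
          ≤ ddist (exchangeAdj M₁ M₂ S') (XVert.elt v) XVert.snk) := by
  intro v
  have st : XAux.Setting M₁ M₂ S vs := ⟨hS₁, hS₂, hne, hnd, hchain, hshort⟩
  -- the source-side master inequality
  have Hs := XAux.master st hS' hS'₁ hS'₂ (XVert.elt v)
  -- the dual (sink-side) setting
  have hddual : ∀ (N₁ N₂ : FinMatroid V) (S₀ : Finset V) (x y : XVert V),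
      ddist (exchangeAdj N₁ N₂ S₀) x y
        = ddist (exchangeAdj N₂ N₁ S₀) (XAux.flip y) (XAux.flip x) :=
    fun N₁ N₂ S₀ x y => XAux.ddist_reverse XAux.flip_flip (XAux.dual_adj N₁ N₂ S₀) x y
  have st2 : XAux.Setting M₂ M₁ S vs.reverse := by
    refine ⟨hS₂, hS₁, by simpa using hne, List.nodup_reverse.2 hnd, ?_, ?_⟩
    · have h2 : (XVert.src :: (vs.reverse.map XVert.elt ++ [XVert.snk]))
          = (List.map XAux.flip
              (XVert.src :: (vs.map XVert.elt ++ [XVert.snk]))).reverse := by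
        simp [List.map_map, List.reverse_append, Function.comp_def, XAux.flip]
      rw [h2]
      refine List.isChain_reverse.2 ?_
      rw [List.isChain_map]
      exact List.IsChain.imp (fun a b h => (XAux.dual_adj M₁ M₂ S a b).1 h) hchain
    · have h3 := hddual M₂ M₁ S XVert.src XVert.snk
      have h4 : XAux.flip (XVert.snk : XVert V) = XVert.src := rfl
      have h5 : XAux.flip (XVert.src : XVert V) = XVert.snk := rfl
      rw [h3, h4, h5, hshort]
      simp
  have hS'r : S' = symmDiff S vs.reverse.toFinset := by
    rw [List.toFinset_reverse]
    exact hS'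
  have Ht := XAux.master st2 hS'r hS'₂ hS'₁ (XVert.elt v)
  rw [hddual M₂ M₁ S XVert.src (XVert.elt v),
    hddual M₂ M₁ S' XVert.src (XVert.elt v)] at Ht
  have h4 : XAux.flip (XVert.elt v) = XVert.elt v := rfl
  have h5 : XAux.flip (XVert.src : XVert V) = XVert.snk := rfl
  rw [h4, h5] at Ht
  have hlen : vs.reverse.length = vs.length := by simp
  rw [hlen] at Ht
  refine ⟨?_, ?_, ?_, ?_⟩
  · intro hlt
    rw [hshort] at hlt
    rwa [min_eq_left hlt.le] at Hs
  · intro hlt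
    rw [hshort] at hlt
    rwa [min_eq_left hlt.le] at Ht
  · intro hge
    rw [hshort] at hge
    rw [hshort]
    rwa [min_eq_right hge] at Hs
  · intro hge
    rw [hshort] at hge
    rw [hshort]
    rwa [min_eq_right hge] at Ht
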